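/- A rank-2 even lattice with Gram matrix [[0,3],[3,2t]] (t ∈ Z) has discriminant −9; conversely, any even rank-2 lattice of discriminant −9 representing 0 (i.e., containing a nonzero isotropic vector) has a basis with Gram matrix of this form for some integer t. -/

import Mathlib

open Matrix

/-- A rank-2 even lattice with Gram matrix `[[0,3],[3,2t]]` has discriminant
`−9`; conversely, any even rank-2 lattice of discriminant `−9` containing a
nonzero isotropic vector has a basis (i.e. a unimodular change of basis `P`)
with Gram matrix of this form for some integer `t`. -/
theorem even_disc_neg_nine_isotropic_gram :
    (∀ t : ℤ, (!![0,3;3,2*t] : Matrix (Fin 2) (Fin 2) ℤ).det = -9) ∧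
    (∀ M : Matrix (Fin 2) (Fin 2) ℤ, M.IsSymm →
      (∀ v : Fin 2 → ℤ, Even (v ⬝ᵥ M.mulVec v)) →
      M.det = -9 →
      (∃ v : Fin 2 → ℤ, v ≠ 0 ∧ v ⬝ᵥ M.mulVec v = 0) →
      ∃ (P : Matrix (Fin 2) (Fin 2) ℤ) (t : ℤ),
        IsUnit P.det ∧ Pᵀ * M * P = !![0,3;3,2*t]) := by
  constructor
  · intro t; simp [Matrix.det_fin_two]
  · intro M hsymm hEven hdet hiso
    obtain ⟨v, hv, hqv⟩ := hiso
    have hba : M 1 0 = M 0 1 := by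
      have := congrFun (congrFun hsymm 1) 0
      simpa [Matrix.transpose_apply] using this.symm
    have hq : ∀ w : Fin 2 → ℤ,
        w ⬝ᵥ M.mulVec w = M 0 0 * (w 0)^2 + 2 * (M 0 1) * (w 0) * (w 1) + M 1 1 * (w 1)^2 := by
      intro w
      simp only [Matrix.mulVec, dotProduct, Fin.sum_univ_two, hba]
      ring
    have hdet9 : (M 0 1)^2 - M 0 0 * M 1 1 = 9 := by
      rw [Matrix.det_fin_two, hba] at hdet; linarith [sq_nonneg (M 0 1)]
    have hvor : v 0 ≠ 0 ∨ v 1 ≠ 0 := by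
      by_contra h
      push_neg at h
      apply hv
      funext i; fin_cases i <;> simp [h.1, h.2]
    have hgN : Int.gcd (v 0) (v 1) ≠ 0 := by
      intro h
      rcases Int.gcd_eq_zero_iff.mp h with ⟨h0, h1⟩
      tauto
    set g : ℤ := (Int.gcd (v 0) (v 1) : ℤ) with hgdef
    have hg : g ≠ 0 := by rw [hgdef]; exact_mod_cast hgN
    set e0 : ℤ := v 0 / g with he0
    set e1 : ℤ := v 1 / g with he1
    have h0 : g * e0 = v 0 := Int.mul_ediv_cancel' (Int.gcd_dvd_left (v 0) (v 1))
    have h1 : g * e1 = v 1 := Int.mul_ediv_cancel' (Int.gcd_dvd_right (v 0) (v 1))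
    have cop : IsCoprime e0 e1 := by
      rw [Int.isCoprime_iff_gcd_eq_one]
      exact Int.gcd_div_gcd_div_gcd (Nat.pos_of_ne_zero hgN)
    obtain ⟨x, y, hxy⟩ := cop
    have hqv' := hqv
    rw [hq] at hqv'
    have he : M 0 0 * e0^2 + 2 * M 0 1 * e0 * e1 + M 1 1 * e1^2 = 0 := by
      have h2 : g^2 * (M 0 0 * e0^2 + 2 * M 0 1 * e0 * e1 + M 1 1 * e1^2)
          = M 0 0 * (v 0)^2 + 2 * (M 0 1) * (v 0) * (v 1) + M 1 1 * (v 1)^2 := by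
        rw [← h0, ← h1]; ring
      exact (mul_eq_zero.mp (h2.trans hqv')).resolve_left (pow_ne_zero 2 hg)
    have hf := hEven ![-y, x]
    rw [hq] at hf
    simp only [Matrix.cons_val_zero, Matrix.cons_val_one, Matrix.head_cons] at hf
    obtain ⟨t, ht⟩ := hf
    have hβ2 : (-(M 0 0)*e0*y + M 0 1*(e0*x - e1*y) + M 1 1*e1*x)^2 = 9 := by
      linear_combination (M 0 0 * y^2 - 2*(M 0 1)*x*y + M 1 1*x^2) * he
        + (e0*x + e1*y)^2 * hdet9 + 9*(x*e0 + y*e1 + 1) * hxy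
    have hcases : (-(M 0 0)*e0*y + M 0 1*(e0*x - e1*y) + M 1 1*e1*x) = 3 ∨
        (-(M 0 0)*e0*y + M 0 1*(e0*x - e1*y) + M 1 1*e1*x) = -3 := by
      rcases mul_eq_zero.mp (show ((-(M 0 0)*e0*y + M 0 1*(e0*x - e1*y) + M 1 1*e1*x) - 3) *
          ((-(M 0 0)*e0*y + M 0 1*(e0*x - e1*y) + M 1 1*e1*x) + 3) = 0 by
        linear_combination hβ2) with h | h
      · left; linarith
      · right; linarith
    rcases hcases with hβ | hβ
    · have hT : (!![e0, -y; e1, x] : Matrix (Fin 2) (Fin 2) ℤ)ᵀ = !![e0, e1; -y, x] := by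
        ext i j; fin_cases i <;> fin_cases j <;> simp
      refine ⟨!![e0, -y; e1, x], t, ?_, ?_⟩
      · have hP : (!![e0, -y; e1, x] : Matrix (Fin 2) (Fin 2) ℤ).det = 1 := by
          rw [Matrix.det_fin_two]; simp; linear_combination hxy
        rw [hP]; exact isUnit_one
      · rw [hT]
        ext i j
        fin_cases i <;> fin_cases j
        · simp [Matrix.mul_apply, Matrix.vecMul, dotProduct, Fin.sum_univ_two, hba]
          linear_combination he
        · simp [Matrix.mul_apply, Matrix.vecMul, dotProduct, Fin.sum_univ_two, hba]
          linear_combination hβ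
        · simp [Matrix.mul_apply, Matrix.vecMul, dotProduct, Fin.sum_univ_two, hba]
          linear_combination hβ
        · simp [Matrix.mul_apply, Matrix.vecMul, dotProduct, Fin.sum_univ_two, hba]
          linear_combination ht
    · have hT : (!![-e0, -y; -e1, x] : Matrix (Fin 2) (Fin 2) ℤ)ᵀ = !![-e0, -e1; -y, x] := by
        ext i j; fin_cases i <;> fin_cases j <;> simp
      refine ⟨!![-e0, -y; -e1, x], t, ?_, ?_⟩
      · have hP : (!![-e0, -y; -e1, x] : Matrix (Fin 2) (Fin 2) ℤ).det = -1 := by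
          rw [Matrix.det_fin_two]; simp; linear_combination -hxy
        rw [hP]; exact IsUnit.neg isUnit_one
      · rw [hT]
        ext i j
        fin_cases i <;> fin_cases j
        · simp [Matrix.mul_apply, Matrix.vecMul, dotProduct, Fin.sum_univ_two, hba]
          linear_combination he
        · simp [Matrix.mul_apply, Matrix.vecMul, dotProduct, Fin.sum_univ_two, hba]
          linear_combination -hβ
        · simp [Matrix.mul_apply, Matrix.vecMul, dotProduct, Fin.sum_univ_two, hba]
          linear_combination -hβ
        · simp [Matrix.mul_apply, Matrix.vecMul, dotProduct, Fin.sum_univ_two, hba]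
          linear_combination ht
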